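/- For z on the boundary of the square D_n (with n ≥ 2), the diagonal operator K on ℓ²(ℕ) defined by K e_j = (z − (2j+1))^{−1/2} e_j satisfies the Schatten-4 norm bound ‖K‖_4^4 = Σ_{j=0}^∞ 1/|z − (2j+1)|² < 20; in particular ‖K‖_4 ≤ 11/5. -/

import Mathlib

open Finset Real

/-- The shifted zeta-2 sum. -/
lemma tsum_shift_zeta : (∑' i : ℕ, 1 / ((i : ℝ) + 1) ^ 2) = Real.pi ^ 2 / 6 := by
  have hZ := hasSum_zeta_two
  have hs : Summable (fun n : ℕ => (1 : ℝ) / (n : ℝ) ^ 2) := hZ.summable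
  have h := (Summable.sum_add_tsum_nat_add (f := fun n : ℕ => (1 : ℝ) / (n : ℝ) ^ 2) 1 hs)
  have h2 : (∑' i : ℕ, (1 : ℝ) / ((i + 1 : ℕ) : ℝ) ^ 2) = ∑' i : ℕ, 1 / ((i : ℝ) + 1) ^ 2 := by
    congr 1; ext i; push_cast; ring
  rw [hZ.tsum_eq] at h
  simpa [Finset.sum_range_one, h2] using h

/-- Schatten-4 norm bound Σ_j 1/|z−(2j+1)|² < 20, hence ‖K‖₄ ≤ 11/5. -/
theorem stmt4 (n : ℕ) (hn : 2 ≤ n) (z : ℂ)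
    (hz : (|z.re - (2*(n:ℝ)+1)| = 1/2 ∧ |z.im| ≤ 1/2) ∨
          (|z.re - (2*(n:ℝ)+1)| ≤ 1/2 ∧ |z.im| = 1/2)) :
    (∑' j : ℕ, 1 / ‖z - (2*(j:ℂ)+1)‖ ^ 2) < 20 ∧
    (∑' j : ℕ, 1 / ‖z - (2*(j:ℂ)+1)‖ ^ 2) ^ ((1:ℝ)/4) ≤ 11/5 := by
  set f : ℕ → ℝ := fun j => 1 / ‖z - (2*(j:ℂ)+1)‖ ^ 2 with hf
  have hx : |z.re - (2*(n:ℝ)+1)| ≤ 1/2 := by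
    rcases hz with ⟨h, _⟩ | ⟨h, _⟩
    · exact le_of_eq h
    · exact h
  -- the squared modulus as real expression
  have habs : ∀ j : ℕ, ‖z - (2*(j:ℂ)+1)‖ ^ 2
      = (z.re - (2*(j:ℝ)+1)) ^ 2 + z.im ^ 2 := by
    intro j
    rw [Complex.sq_norm, Complex.normSq_apply]
    simp [Complex.sub_re, Complex.sub_im, Complex.add_re, Complex.add_im]
    ring
  have hfnonneg : ∀ j, 0 ≤ f j := fun j => by positivity
  -- key off-diagonal estimate
  have key : ∀ j : ℕ, j ≠ n → f j ≤ 4/9 * (1 / ((n : ℝ) - j) ^ 2) := by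
    intro j hj
    set d : ℝ := (n : ℝ) - j with hd
    have hd1 : 1 ≤ |d| := by
      rcases Nat.lt_or_ge j n with h | h
      · have h' : (j : ℝ) + 1 ≤ n := by exact_mod_cast h
        rw [abs_of_nonneg (by simp only [hd]; linarith)]; simp only [hd]; linarith
      · have h'' : n < j := by omega
        have h' : (n : ℝ) + 1 ≤ j := by exact_mod_cast h''
        rw [abs_of_nonpos (by simp only [hd]; linarith)]; simp only [hd]; linarith
    have h2d : 2 * |d| ≤ |z.re - (2*(j:ℝ)+1)| + 1/2 := by
      have heq : 2 * d = (z.re - (2*(j:ℝ)+1)) - (z.re - (2*(n:ℝ)+1)) := by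
        simp [hd]; ring
      calc 2 * |d| = |2 * d| := by rw [abs_mul]; simp
        _ = |(z.re - (2*(j:ℝ)+1)) - (z.re - (2*(n:ℝ)+1))| := by rw [heq]
        _ ≤ |z.re - (2*(j:ℝ)+1)| + |z.re - (2*(n:ℝ)+1)| := abs_sub _ _
        _ ≤ |z.re - (2*(j:ℝ)+1)| + 1/2 := by linarith
    have h32 : 3/2 * |d| ≤ |z.re - (2*(j:ℝ)+1)| := by linarith
    have hsq : (3/2 * |d|) ^ 2 ≤ (z.re - (2*(j:ℝ)+1)) ^ 2 := by
      calc (3/2 * |d|) ^ 2 ≤ |z.re - (2*(j:ℝ)+1)| ^ 2 :=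
            pow_le_pow_left₀ (by positivity) h32 2
        _ = (z.re - (2*(j:ℝ)+1)) ^ 2 := sq_abs _
    have hlow : 9/4 * d ^ 2 ≤ ‖z - (2*(j:ℂ)+1)‖ ^ 2 := by
      rw [habs j]
      have : (3/2 * |d|) ^ 2 = 9/4 * d ^ 2 := by rw [mul_pow, sq_abs]; ring
      nlinarith [sq_nonneg z.im]
    have hdpos : 0 < d ^ 2 := by nlinarith [sq_abs d]
    have h9 := one_div_le_one_div_of_le (mul_pos (by norm_num : (0:ℝ) < 9/4) hdpos) hlow
    calc f j ≤ 1 / (9/4 * d ^ 2) := h9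
      _ = 4/9 * (1 / d ^ 2) := by field_simp
  -- diagonal estimate
  have hfn : f n ≤ 4 := by
    have h14 : 1/4 ≤ ‖z - (2*(n:ℂ)+1)‖ ^ 2 := by
      rw [habs n]
      rcases hz with ⟨h, _⟩ | ⟨_, h⟩
      · nlinarith [sq_abs (z.re - (2*(n:ℝ)+1)), sq_nonneg z.im]
      · nlinarith [sq_abs z.im, sq_nonneg (z.re - (2*(n:ℝ)+1))]
    have h := one_div_le_one_div_of_le (by norm_num) h14
    norm_num at h
    simpa [hf] using h
  -- tail comparison
  have htail : ∀ i : ℕ, f (i + (n+1)) ≤ 4/9 * (1 / ((i : ℝ) + 1) ^ 2) := by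
    intro i
    have h := key (i + (n+1)) (by omega)
    have : ((n : ℝ) - (i + (n+1) : ℕ)) ^ 2 = ((i : ℝ) + 1) ^ 2 := by push_cast; ring
    rwa [this] at h
  have hz2 : Summable (fun i : ℕ => 1 / ((i : ℝ) + 1) ^ 2) := by
    have h1 : Summable (fun i : ℕ => (1 : ℝ) / ((i + 1 : ℕ) : ℝ) ^ 2) :=
      (summable_nat_add_iff (f := fun k : ℕ => (1 : ℝ) / (k : ℝ) ^ 2) 1).2
        hasSum_zeta_two.summable
    exact h1.congr fun i => by push_cast; ring
  have hg : Summable (fun i : ℕ => 4/9 * (1 / ((i : ℝ) + 1) ^ 2)) :=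
    hz2.mul_left (4/9)
  have hsumtail : Summable (fun i : ℕ => f (i + (n+1))) :=
    Summable.of_nonneg_of_le (fun i => hfnonneg _) htail hg
  have hsum : Summable f := (summable_nat_add_iff (n+1)).1 hsumtail
  -- zeta bound
  have hpi : Real.pi ^ 2 / 6 ≤ 8/3 := by
    nlinarith [Real.pi_le_four, Real.pi_pos]
  have hT : (∑' i : ℕ, 1 / ((i : ℝ) + 1) ^ 2) ≤ 8/3 := by
    rw [tsum_shift_zeta]; exact hpi
  -- tail sum bound
  have htailsum : (∑' i : ℕ, f (i + (n+1))) ≤ 32/27 := by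
    calc (∑' i : ℕ, f (i + (n+1)))
        ≤ ∑' i : ℕ, 4/9 * (1 / ((i : ℝ) + 1) ^ 2) := Summable.tsum_le_tsum htail hsumtail hg
      _ = 4/9 * ∑' i : ℕ, 1 / ((i : ℝ) + 1) ^ 2 := tsum_mul_left
      _ ≤ 4/9 * (8/3) := by
          apply mul_le_mul_of_nonneg_left hT (by norm_num)
      _ = 32/27 := by norm_num
  -- head sum bound
  have hhead : ∑ j ∈ range n, f j ≤ 32/27 := by
    have h1 : ∑ j ∈ range n, f j ≤ ∑ j ∈ range n, 4/9 * (1 / ((n : ℝ) - j) ^ 2) :=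
      Finset.sum_le_sum fun j hj => key j (by simp at hj; omega)
    have h2 : ∑ j ∈ range n, 4/9 * (1 / ((n : ℝ) - j) ^ 2)
        = ∑ j ∈ range n, 4/9 * (1 / ((j : ℝ) + 1) ^ 2) := by
      rw [← Finset.sum_range_reflect (fun j => 4/9 * (1 / ((j : ℝ) + 1) ^ 2)) n]
      apply Finset.sum_congr rfl
      intro j hj
      simp only [Finset.mem_range] at hj
      have : ((n - 1 - j : ℕ) : ℝ) = (n : ℝ) - 1 - j := by
        have h1 : 1 + j ≤ n := by omega
        push_cast [Nat.sub_sub, Nat.cast_sub h1]; ring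
      rw [this]; ring_nf
    have h3 : ∑ j ∈ range n, 4/9 * (1 / ((j : ℝ) + 1) ^ 2)
        ≤ ∑' j : ℕ, 4/9 * (1 / ((j : ℝ) + 1) ^ 2) :=
      Summable.sum_le_tsum _ (fun j _ => by positivity) hg
    have h4 : (∑' j : ℕ, 4/9 * (1 / ((j : ℝ) + 1) ^ 2)) ≤ 32/27 := by
      rw [tsum_mul_left, tsum_shift_zeta]; linarith
    linarith
  -- assemble
  have hdecomp := Summable.sum_add_tsum_nat_add (f := f) (n+1) hsum
  have hS : (∑' j : ℕ, f j) < 20 := by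
    rw [← hdecomp, Finset.sum_range_succ]
    linarith
  refine ⟨hS, ?_⟩
  have hS0 : 0 ≤ ∑' j : ℕ, f j := tsum_nonneg hfnonneg
  have h20 : (∑' j : ℕ, f j) ≤ (11/5 : ℝ) ^ (4 : ℕ) := by
    norm_num; linarith
  calc (∑' j : ℕ, f j) ^ ((1:ℝ)/4)
      ≤ ((11/5 : ℝ) ^ (4 : ℕ)) ^ ((1:ℝ)/4) :=
        Real.rpow_le_rpow hS0 h20 (by norm_num)
    _ = 11/5 := by
        rw [← Real.rpow_natCast (11/5 : ℝ) 4, ← Real.rpow_mul (by norm_num)]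
        norm_num
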